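/- Let E = ([p]×[q]) \ {(i,j)}. A partial real matrix M_E has a unique completion of rank at most r if and only if the submatrices M_{î,:}, M_{:,ĵ}, and M_{î,ĵ} all have rank exactly r; equivalently, M_{î,ĵ} contains a nonzero r×r minor and both M_{î,:} and M_{:,ĵ} have rank r. -/

import Mathlib

open Matrix Function Submodule Module


open Matrix Function Submodule Module

variable {K : Type*} [Field K] {m n o : Type*} [Fintype m] [Fintype n] [Fintype o]

lemma rank_sub_rows_le (A : Matrix m n K) (e : o → m) :
    (A.submatrix e id).rank ≤ A.rank := by
  rw [rank_eq_finrank_span_row, rank_eq_finrank_span_row]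
  apply Submodule.finrank_mono
  apply Submodule.span_mono
  rintro _ ⟨k, rfl⟩
  exact ⟨e k, rfl⟩

lemma rank_sub_cols_le (A : Matrix m n K) (g : o → n) :
    (A.submatrix id g).rank ≤ A.rank := by
  rw [← rank_transpose A, ← rank_transpose (A.submatrix id g)]
  exact rank_sub_rows_le Aᵀ g

lemma rank_sub_le (A : Matrix m n K) (e : o → m) (g : o → n) :
    (A.submatrix e g).rank ≤ A.rank :=
  le_trans (rank_sub_cols_le (A.submatrix e id) g) (rank_sub_rows_le A e)

lemma card_le_rank_of_minor [DecidableEq o] (A : Matrix m n K) (e : o → m) (g : o → n)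
    (h : (A.submatrix e g).det ≠ 0) :
    Fintype.card o ≤ A.rank := by
  have hu : IsUnit (A.submatrix e g) :=
    (Matrix.isUnit_iff_isUnit_det _).2 (isUnit_iff_ne_zero.2 h)
  calc Fintype.card o = (A.submatrix e g).rank := (Matrix.rank_of_isUnit _ hu).symm
    _ ≤ A.rank := rank_sub_le A e g

lemma exists_li_rows (A : Matrix m n K) {s : ℕ} (h : s ≤ A.rank) :
    ∃ e : Fin s → m, Injective e ∧ LinearIndependent K (fun k => A (e k)) := by
  classical
  obtain ⟨b, hbsub, hspan, hli⟩ := exists_linearIndependent K (Set.range A)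
  have hbfin : b.Finite := (Set.finite_range A).subset hbsub
  have : Fintype b := hbfin.fintype
  have hcard : s ≤ Fintype.card b := by
    have h1 : A.rank = finrank K (span K b) := by
      rw [rank_eq_finrank_span_row, hspan]
      rfl
    have h2 : finrank K (span K b) = Fintype.card b := by
      rw [finrank_span_set_eq_card hli, Set.toFinset_card]
    omega
  set v : Fin s → b := fun k => (Fintype.equivFin b).symm (Fin.castLE hcard k) with hv
  have hvinj : Injective v := (Equiv.injective _).comp (Fin.castLE_injective _)
  choose e he using fun k => hbsub (v k).2
  refine ⟨e, ?_, ?_⟩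
  · intro k1 k2 hk
    apply hvinj
    apply Subtype.ext
    rw [← he k1, ← he k2, hk]
  · have hfe : (fun k => A (e k)) = (Subtype.val ∘ v) := funext fun k => he k
    rw [hfe]
    exact hli.comp v hvinj

lemma exists_minor [DecidableEq m] (A : Matrix m n K) {s : ℕ} (h : s ≤ A.rank) :
    ∃ (e : Fin s → m) (g : Fin s → n),
      Injective e ∧ Injective g ∧ (A.submatrix e g).det ≠ 0 := by
  classical
  obtain ⟨e, he, hli⟩ := exists_li_rows A h
  have hN : (A.submatrix e id).rank = s := by
    have := hli.rank_matrix (M := A.submatrix e id)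
    simpa using this
  obtain ⟨g, hg, hlig⟩ := exists_li_rows (A.submatrix e id)ᵀ
    (by rw [rank_transpose, hN])
  refine ⟨e, g, he, hg, ?_⟩
  have hu : IsUnit ((A.submatrix e id)ᵀ.submatrix g id) :=
    Matrix.linearIndependent_rows_iff_isUnit.1 hlig
  have hdet : IsUnit ((A.submatrix e id)ᵀ.submatrix g id).det :=
    (Matrix.isUnit_iff_isUnit_det _).1 hu
  have : ((A.submatrix e id)ᵀ.submatrix g id) = (A.submatrix e g)ᵀ := rfl
  rw [this, Matrix.det_transpose] at hdet
  exact hdet.ne_zero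

lemma rank_le_rank_subrow_add_one (A : Matrix m n K) (i : m) :
    A.rank ≤ (A.submatrix ((↑) : {k : m // k ≠ i} → m) id).rank + 1 := by
  classical
  rw [rank_eq_finrank_span_row, rank_eq_finrank_span_row]
  simp only [Matrix.row]
  set P := span K (Set.range (A.submatrix ((↑) : {k : m // k ≠ i} → m) id)) with hP
  have hle : span K (Set.range A) ≤ P ⊔ span K {A i} := by
    rw [span_le]
    rintro _ ⟨k, rfl⟩
    by_cases hk : k = i
    · subst hk
      exact mem_sup_right (subset_span rfl)
    · exact mem_sup_left (subset_span ⟨⟨k, hk⟩, rfl⟩)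
  have h1 : finrank K (span K (Set.range A)) ≤ finrank K ((P ⊔ span K {A i} : Submodule K (n → K))) :=
    Submodule.finrank_mono hle
  have h2 : finrank K ((P ⊔ span K {A i} : Submodule K (n → K))) ≤
      finrank K P + finrank K (span K ({A i} : Set (n → K))) :=
    Submodule.finrank_add_le_finrank_add_finrank _ _
  have h3 : finrank K (span K ({A i} : Set (n → K))) ≤ 1 := by
    have := finrank_span_le_card (R := K) ({A i} : Set (n → K))
    simpa using this
  exact h1.trans (h2.trans (Nat.add_le_add_left h3 _))

lemma rank_le_rank_subcol_add_one [DecidableEq n] (A : Matrix m n K) (j : n) :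
    A.rank ≤ (A.submatrix id ((↑) : {l : n // l ≠ j} → n)).rank + 1 := by
  rw [← rank_transpose A, ← rank_transpose (A.submatrix id _)]
  exact rank_le_rank_subrow_add_one Aᵀ j


section M
variable {p q r : ℕ} (f : Fin p → Fin q → ℝ) (i : Fin p) (j : Fin q)

private lemma complete_of_ranks
    (hR : ((Matrix.of f).submatrix (fun k : {k : Fin p // k ≠ i} => (k : Fin p)) id).rank = r)
    (hC : ((Matrix.of f).submatrix id (fun l : {l : Fin q // l ≠ j} => (l : Fin q))).rank = r)
    (hB : ((Matrix.of f).submatrix (fun k : {k : Fin p // k ≠ i} => (k : Fin p))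
          (fun l : {l : Fin q // l ≠ j} => (l : Fin q))).rank = r) :
    ∃! M : Matrix (Fin p) (Fin q) ℝ, M.rank ≤ r ∧
        ∀ k l, (k, l) ≠ (i, j) → M k l = f k l := by
  classical
  set B := (Matrix.of f).submatrix (fun k : {k : Fin p // k ≠ i} => (k : Fin p))
      (fun l : {l : Fin q // l ≠ j} => (l : Fin q)) with hBdef
  set R := (Matrix.of f).submatrix (fun k : {k : Fin p // k ≠ i} => (k : Fin p)) id with hRdef
  set C := (Matrix.of f).submatrix id (fun l : {l : Fin q // l ≠ j} => (l : Fin q)) with hCdef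
  -- row i restricted lies in the row span of B
  have hmem : (fun l : {l : Fin q // l ≠ j} => f i ↑l) ∈ span ℝ (Set.range B) := by
    have hle : span ℝ (Set.range B) ≤ span ℝ (Set.range C) := by
      apply Submodule.span_mono
      rintro _ ⟨k, rfl⟩
      exact ⟨↑k, rfl⟩
    have heq : span ℝ (Set.range B) = span ℝ (Set.range C) := by
      apply Submodule.eq_of_le_of_finrank_le hle
      change finrank ℝ (span ℝ (Set.range C.row)) ≤ finrank ℝ (span ℝ (Set.range B.row))
      rw [← rank_eq_finrank_span_row, ← rank_eq_finrank_span_row, hB, hC]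
    rw [heq]
    exact subset_span ⟨i, rfl⟩
  obtain ⟨d, hd⟩ := (mem_span_range_iff_exists_fun ℝ).1 hmem
  have hd' : ∀ l : {l : Fin q // l ≠ j}, (∑ k : {k : Fin p // k ≠ i}, d k * f ↑k ↑l) = f i ↑l := by
    intro l
    have := congrFun hd l
    simpa [Finset.sum_apply, hBdef] using this
  set M : Matrix (Fin p) (Fin q) ℝ :=
    fun k l => if k = i then ∑ k' : {k : Fin p // k ≠ i}, d k' * f ↑k' l else f k l with hM
  have hMe : ∀ k l, (k, l) ≠ (i, j) → M k l = f k l := by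
    intro k l hkl
    by_cases hk : k = i
    · subst hk
      have hl : l ≠ j := by
        rintro rfl; exact hkl rfl
      simpa [hM] using hd' ⟨l, hl⟩
    · simp [hM, hk]
  have hMr : M.rank ≤ r := by
    rw [← hR, rank_eq_finrank_span_row, rank_eq_finrank_span_row]
    simp only [Matrix.row]
    apply Submodule.finrank_mono
    rw [span_le]
    rintro _ ⟨k, rfl⟩
    by_cases hk : k = i
    · subst hk
      have hrow : M k = ∑ k' : {k' : Fin p // k' ≠ k}, d k' • R k' := by
        funext l
        simp [hM, Finset.sum_apply, hRdef]
      rw [hrow]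
      exact sum_mem fun k' _ => smul_mem _ _ (subset_span ⟨k', rfl⟩)
    · have hrow : M k = R ⟨k, hk⟩ := by
        funext l
        simp [hM, hk, hRdef]
      rw [hrow]
      exact subset_span ⟨⟨k, hk⟩, rfl⟩
  -- uniqueness via a nonzero r×r minor of B
  obtain ⟨ρ, σ, hρ, hσ, hdet⟩ := exists_minor B hB.ge
  set D : Matrix (Fin r) (Fin r) ℝ := B.submatrix ρ σ with hD
  have : Invertible D := D.invertibleOfIsUnitDet (isUnit_iff_ne_zero.2 hdet)
  set w : ℝ := ((Matrix.of fun (_ : Unit) t => f i ↑(σ t)) * ⅟D *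
      (Matrix.of fun t (_ : Unit) => f ↑(ρ t) j)) () () with hw
  have key : ∀ N : Matrix (Fin p) (Fin q) ℝ, N.rank ≤ r →
      (∀ k l, (k, l) ≠ (i, j) → N k l = f k l) → N i j = w := by
    intro N hNr hNe
    set S : Matrix (Fin r ⊕ Unit) (Fin r ⊕ Unit) ℝ :=
      Matrix.fromBlocks D (Matrix.of fun t _ => f ↑(ρ t) j)
        (Matrix.of fun _ t => f i ↑(σ t)) (Matrix.of fun _ _ => N i j) with hS
    have hSsub : S = N.submatrix (Sum.elim (fun t => (↑(ρ t) : Fin p)) fun _ => i)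
        (Sum.elim (fun t => (↑(σ t) : Fin q)) fun _ => j) := by
      ext (t | t) (u | u)
      · exact (hNe _ _ (fun hc => (ρ t).2 (congrArg Prod.fst hc))).symm
      · exact (hNe _ _ (fun hc => (ρ t).2 (congrArg Prod.fst hc))).symm
      · exact (hNe _ _ (fun hc => (σ u).2 (congrArg Prod.snd hc))).symm
      · rfl
    have hSdet : S.det = 0 := by
      by_contra h0
      have hcard := card_le_rank_of_minor N _ _ (hSsub ▸ h0)
      simp only [Fintype.card_sum, Fintype.card_fin, Fintype.card_unit] at hcard
      omega
    rw [hS, Matrix.det_fromBlocks₁₁] at hSdet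
    have h2 : ((Matrix.of fun (_ : Unit) (_ : Unit) => N i j) -
        (Matrix.of fun _ t => f i ↑(σ t)) * ⅟D * (Matrix.of fun t _ => f ↑(ρ t) j)).det = 0 := by
      rcases mul_eq_zero.1 hSdet with h | h
      · exact absurd h hdet
      · exact h
    rw [Matrix.det_unique] at h2
    have h3 : N i j - w = 0 := by simpa [hw] using h2
    linarith
  refine ⟨M, ⟨hMr, hMe⟩, ?_⟩
  rintro N ⟨hNr, hNe⟩
  ext k l
  by_cases hkl : (k, l) = (i, j)
  · obtain ⟨hk, hl⟩ := Prod.mk.injEq .. ▸ hkl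
    subst hk; subst hl
    rw [key N hNr hNe, key M hMr hMe]
  · rw [hNe k l hkl, hMe k l hkl]

private lemma ranks_of_complete
    (h : ∃! M : Matrix (Fin p) (Fin q) ℝ, M.rank ≤ r ∧
        ∀ k l, (k, l) ≠ (i, j) → M k l = f k l) :
    ((Matrix.of f).submatrix (fun k : {k : Fin p // k ≠ i} => (k : Fin p)) id).rank = r ∧
    ((Matrix.of f).submatrix id (fun l : {l : Fin q // l ≠ j} => (l : Fin q))).rank = r ∧
    ((Matrix.of f).submatrix (fun k : {k : Fin p // k ≠ i} => (k : Fin p))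
        (fun l : {l : Fin q // l ≠ j} => (l : Fin q))).rank = r := by
  classical
  set B := (Matrix.of f).submatrix (fun k : {k : Fin p // k ≠ i} => (k : Fin p))
      (fun l : {l : Fin q // l ≠ j} => (l : Fin q)) with hBdef
  set R := (Matrix.of f).submatrix (fun k : {k : Fin p // k ≠ i} => (k : Fin p)) id with hRdef
  set C := (Matrix.of f).submatrix id (fun l : {l : Fin q // l ≠ j} => (l : Fin q)) with hCdef
  obtain ⟨M₀, ⟨hM₀r, hM₀e⟩, huniq⟩ := h
  have hRsub : M₀.submatrix (fun k : {k : Fin p // k ≠ i} => (k : Fin p)) id = R := by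
    ext k l
    exact hM₀e ↑k l fun hc => k.2 (congrArg Prod.fst hc)
  have hCsub : M₀.submatrix id (fun l : {l : Fin q // l ≠ j} => (l : Fin q)) = C := by
    ext k l
    exact hM₀e k ↑l fun hc => l.2 (congrArg Prod.snd hc)
  -- generic completion with value x
  set Mx : ℝ → Matrix (Fin p) (Fin q) ℝ :=
    fun x k l => if (k, l) = (i, j) then x else f k l with hMx
  have hMxe : ∀ x k l, (k, l) ≠ (i, j) → Mx x k l = f k l := by
    intro x k l hkl
    exact if_neg hkl
  have hMxR : ∀ x, (Mx x).submatrix (fun k : {k : Fin p // k ≠ i} => (k : Fin p)) id = R := by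
    intro x; ext k l
    exact hMxe x ↑k l fun hc => k.2 (congrArg Prod.fst hc)
  have hMxC : ∀ x, (Mx x).submatrix id (fun l : {l : Fin q // l ≠ j} => (l : Fin q)) = C := by
    intro x; ext k l
    exact hMxe x k ↑l fun hc => l.2 (congrArg Prod.snd hc)
  have hR : R.rank = r := by
    have hle : R.rank ≤ r := by
      rw [← hRsub]
      exact le_trans (rank_sub_rows_le M₀ _) hM₀r
    rcases eq_or_lt_of_le hle with hEq | hlt
    · exact hEq
    · exfalso
      have hcmp : ∀ x : ℝ, (Mx x).rank ≤ r := by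
        intro x
        have := rank_le_rank_subrow_add_one (Mx x) i
        rw [hMxR x] at this
        omega
      have h01 : Mx 0 = Mx 1 := by
        rw [huniq (Mx 0) ⟨hcmp 0, hMxe 0⟩, huniq (Mx 1) ⟨hcmp 1, hMxe 1⟩]
      have := congrFun (congrFun h01 i) j
      simp [hMx] at this
  have hC : C.rank = r := by
    have hle : C.rank ≤ r := by
      rw [← hCsub]
      exact le_trans (rank_sub_cols_le M₀ _) hM₀r
    rcases eq_or_lt_of_le hle with hEq | hlt
    · exact hEq
    · exfalso
      have hcmp : ∀ x : ℝ, (Mx x).rank ≤ r := by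
        intro x
        have := rank_le_rank_subcol_add_one (Mx x) j
        rw [hMxC x] at this
        omega
      have h01 : Mx 0 = Mx 1 := by
        rw [huniq (Mx 0) ⟨hcmp 0, hMxe 0⟩, huniq (Mx 1) ⟨hcmp 1, hMxe 1⟩]
      have := congrFun (congrFun h01 i) j
      simp [hMx] at this
  refine ⟨hR, hC, ?_⟩
  have hBle : B.rank ≤ r := by
    have : B = R.submatrix id (fun l : {l : Fin q // l ≠ j} => (l : Fin q)) := rfl
    rw [this, ← hR]
    exact rank_sub_cols_le R _
  rcases eq_or_lt_of_le hBle with hEq | hlt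
  · exact hEq
  exfalso
  -- row i restricted is not in the row span of B
  have hanot : (fun l : {l : Fin q // l ≠ j} => f i ↑l) ∉ span ℝ (Set.range B) := by
    intro hmem
    have hCle : span ℝ (Set.range C) ≤ span ℝ (Set.range B) := by
      rw [span_le]
      rintro _ ⟨k, rfl⟩
      by_cases hk : k = i
      · subst hk; exact hmem
      · exact subset_span ⟨⟨k, hk⟩, rfl⟩
    have hmono := Submodule.finrank_mono hCle
    change finrank ℝ (span ℝ (Set.range C.row)) ≤ finrank ℝ (span ℝ (Set.range B.row)) at hmono
    rw [← rank_eq_finrank_span_row, ← rank_eq_finrank_span_row, hC] at hmono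
    omega
  have hMia : M₀ i ∉ span ℝ (Set.range R) := by
    intro hmem
    obtain ⟨c, hc⟩ := (mem_span_range_iff_exists_fun ℝ).1 hmem
    apply hanot
    refine (mem_span_range_iff_exists_fun ℝ).2 ⟨c, ?_⟩
    funext l
    have h1 := congrFun hc ↑l
    have h2 : M₀ i ↑l = f i ↑l :=
      hM₀e i ↑l fun hc' => l.2 (congrArg Prod.snd hc')
    simp only [Finset.sum_apply, Pi.smul_apply, smul_eq_mul] at h1 ⊢
    rw [← h2]
    exact h1
  have hlt2 : span ℝ (Set.range R) < span ℝ (Set.range R) ⊔ span ℝ {M₀ i} := by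
    refine lt_of_le_of_ne le_sup_left fun hEq => hMia ?_
    rw [hEq]
    exact mem_sup_right (subset_span rfl)
  have hfin : finrank ℝ (span ℝ (Set.range R)) <
      finrank ℝ ((span ℝ (Set.range R) ⊔ span ℝ {M₀ i} : Submodule ℝ (Fin q → ℝ))) :=
    Submodule.finrank_lt_finrank_of_lt hlt2
  have hsuple : (span ℝ (Set.range R) ⊔ span ℝ {M₀ i} : Submodule ℝ (Fin q → ℝ)) ≤
      span ℝ (Set.range M₀) := by
    apply sup_le
    · rw [← hRsub]
      apply Submodule.span_mono
      rintro _ ⟨k, rfl⟩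
      exact ⟨↑k, rfl⟩
    · rw [span_le, Set.singleton_subset_iff]
      exact subset_span ⟨i, rfl⟩
  have hfin2 := Submodule.finrank_mono hsuple
  have hrankR : R.rank = finrank ℝ (span ℝ (Set.range R)) := rank_eq_finrank_span_row R
  have hrankM : M₀.rank = finrank ℝ (span ℝ (Set.range M₀)) := rank_eq_finrank_span_row M₀
  omega

end M

theorem stmt13 {p q r : ℕ} (f : Fin p → Fin q → ℝ) (i : Fin p) (j : Fin q) :
    ((∃! M : Matrix (Fin p) (Fin q) ℝ, M.rank ≤ r ∧
        ∀ k l, (k, l) ≠ (i, j) → M k l = f k l) ↔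
      (((Matrix.of f).submatrix (fun k : {k : Fin p // k ≠ i} => (k : Fin p)) id).rank = r ∧
       ((Matrix.of f).submatrix id (fun l : {l : Fin q // l ≠ j} => (l : Fin q))).rank = r ∧
       ((Matrix.of f).submatrix (fun k : {k : Fin p // k ≠ i} => (k : Fin p))
          (fun l : {l : Fin q // l ≠ j} => (l : Fin q))).rank = r)) ∧
    ((((Matrix.of f).submatrix (fun k : {k : Fin p // k ≠ i} => (k : Fin p)) id).rank = r ∧
      ((Matrix.of f).submatrix id (fun l : {l : Fin q // l ≠ j} => (l : Fin q))).rank = r ∧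
      ((Matrix.of f).submatrix (fun k : {k : Fin p // k ≠ i} => (k : Fin p))
         (fun l : {l : Fin q // l ≠ j} => (l : Fin q))).rank = r) ↔
     (((Matrix.of f).submatrix (fun k : {k : Fin p // k ≠ i} => (k : Fin p)) id).rank = r ∧
      ((Matrix.of f).submatrix id (fun l : {l : Fin q // l ≠ j} => (l : Fin q))).rank = r ∧
      ∃ (ρ : Fin r → {k : Fin p // k ≠ i}) (σ : Fin r → {l : Fin q // l ≠ j}),
        Function.Injective ρ ∧ Function.Injective σ ∧
        (((Matrix.of f).submatrix (fun k : {k : Fin p // k ≠ i} => (k : Fin p))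
            (fun l : {l : Fin q // l ≠ j} => (l : Fin q))).submatrix ρ σ).det ≠ 0)) := by
  classical
  constructor
  · constructor
    · exact ranks_of_complete f i j
    · rintro ⟨hR, hC, hB⟩
      exact complete_of_ranks f i j hR hC hB
  · constructor
    · rintro ⟨hR, hC, hB⟩
      obtain ⟨ρ, σ, hρ, hσ, hdet⟩ := exists_minor ((Matrix.of f).submatrix
        (fun k : {k : Fin p // k ≠ i} => (k : Fin p))
        (fun l : {l : Fin q // l ≠ j} => (l : Fin q))) hB.ge
      exact ⟨hR, hC, ρ, σ, hρ, hσ, hdet⟩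
    · rintro ⟨hR, hC, ρ, σ, hρ, hσ, hdet⟩
      refine ⟨hR, hC, le_antisymm ?_ ?_⟩
      · have hBR : (Matrix.of f).submatrix (fun k : {k : Fin p // k ≠ i} => (k : Fin p))
              (fun l : {l : Fin q // l ≠ j} => (l : Fin q)) =
            ((Matrix.of f).submatrix (fun k : {k : Fin p // k ≠ i} => (k : Fin p)) id).submatrix
              id (fun l : {l : Fin q // l ≠ j} => (l : Fin q)) := rfl
        rw [hBR, ← hR]
        exact rank_sub_cols_le ((Matrix.of f).submatrix
          (fun k : {k : Fin p // k ≠ i} => (k : Fin p)) id)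
          (fun l : {l : Fin q // l ≠ j} => (l : Fin q))
      · have := card_le_rank_of_minor ((Matrix.of f).submatrix
          (fun k : {k : Fin p // k ≠ i} => (k : Fin p))
          (fun l : {l : Fin q // l ≠ j} => (l : Fin q))) ρ σ hdet
        simpa using this
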